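/- Let (X,d) be a complete geodesic metric space satisfying the tripod condition, and let c₀,c₁:[0,1]→X be two shortest geodesics (parametrized proportionally to arclength) with the same endpoints c₀(0)=c₁(0)=x₀ and c₀(1)=c₁(1)=x₁. Then there exists a geodesic homotopy between c₀ and c₁: a continuous map c:[0,1]×[0,1]→X with c(t,0)=c₀(t) and c(t,1)=c₁(t) for all t, such that for every s ∈ [0,1] the curve t ↦ c(t,s) is a shortest geodesic from x₀ to x₁ (i.e., of length d(x₀,x₁) and parametrized proportionally to arclength). -/

import Mathlib

/-- A metric space satisfies the tripod condition if every triple of points has a median. -/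
def TripodCond (X : Type*) [MetricSpace X] : Prop :=
  ∀ x₁ x₂ x₃ : X, ∃ m : X,
    dist x₁ m + dist x₂ m = dist x₁ x₂ ∧
    dist x₁ m + dist x₃ m = dist x₁ x₃ ∧
    dist x₂ m + dist x₃ m = dist x₂ x₃

/-- `γ` is a geodesic from `x` to `y`: an isometric embedding of `[0, dist x y]`
with `γ 0 = x` and `γ (dist x y) = y`. -/
def IsGeodesicFrom {X : Type*} [MetricSpace X] (x y : X) (γ : ℝ → X) : Prop :=
  γ 0 = x ∧ γ (dist x y) = y ∧
    ∀ s ∈ Set.Icc (0:ℝ) (dist x y), ∀ t ∈ Set.Icc (0:ℝ) (dist x y),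
      dist (γ s) (γ t) = |s - t|

/-- A metric space is geodesic if every pair of points is joined by a geodesic. -/
def GeodesicSpace (X : Type*) [MetricSpace X] : Prop :=
  ∀ x y : X, ∃ γ : ℝ → X, IsGeodesicFrom x y γ

/-- A shortest geodesic from `x₀` to `x₁`, parametrized proportionally to
arclength on `[0,1]`. -/
def PropGeodesic {X : Type*} [MetricSpace X] (x₀ x₁ : X) (c : ℝ → X) : Prop :=
  c 0 = x₀ ∧ c 1 = x₁ ∧
    ∀ s ∈ Set.Icc (0:ℝ) 1, ∀ t ∈ Set.Icc (0:ℝ) 1,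
      dist (c s) (c t) = |s - t| * dist x₀ x₁

namespace Stmt12

variable {X : Type*} [MetricSpace X]

lemma prop_dist {x₀ x₁ : X} {u : ℝ → X} (hu : PropGeodesic x₀ x₁ u)
    {s t : ℝ} (h0 : 0 ≤ s) (hst : s ≤ t) (h1 : t ≤ 1) :
    dist (u s) (u t) = (t - s) * dist x₀ x₁ := by
  have h := hu.2.2 s ⟨h0, hst.trans h1⟩ t ⟨h0.trans hst, h1⟩
  rwa [abs_of_nonpos (by linarith), neg_sub] at h

lemma prop_of_lip {x₀ x₁ : X} {u : ℝ → X} (h0 : u 0 = x₀) (h1 : u 1 = x₁)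
    (hlip : ∀ s t : ℝ, 0 ≤ s → s ≤ t → t ≤ 1 → dist (u s) (u t) ≤ (t - s) * dist x₀ x₁) :
    PropGeodesic x₀ x₁ u := by
  have key : ∀ s t : ℝ, 0 ≤ s → s ≤ t → t ≤ 1 →
      dist (u s) (u t) = (t - s) * dist x₀ x₁ := by
    intro s t hs hst ht
    have hD : dist x₀ x₁ = dist (u 0) (u 1) := by rw [h0, h1]
    have t1 : dist (u 0) (u 1) ≤ dist (u 0) (u s) + dist (u s) (u t) + dist (u t) (u 1) :=
      dist_triangle4 _ _ _ _
    have b1 : dist (u 0) (u s) ≤ (s - 0) * dist x₀ x₁ := hlip 0 s le_rfl hs (hst.trans ht)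
    have b2 : dist (u t) (u 1) ≤ (1 - t) * dist x₀ x₁ := hlip t 1 (hs.trans hst) ht le_rfl
    have b3 : dist (u s) (u t) ≤ (t - s) * dist x₀ x₁ := hlip s t hs hst ht
    nlinarith [dist_nonneg (x := u s) (y := u t)]
  refine ⟨h0, h1, ?_⟩
  intro s hs t ht
  rcases le_total s t with h | h
  · rw [abs_of_nonpos (by linarith), neg_sub]; exact key s t hs.1 h ht.2
  · rw [abs_of_nonneg (by linarith), dist_comm]
    exact key t s ht.1 h hs.2

lemma stepdown {x₀ x₁ : X} {u v : ℝ → X} (hu : PropGeodesic x₀ x₁ u)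
    (hv : PropGeodesic x₀ x₁ v) {β : ℝ} (hβ : β ≤ 1) (hvβ : v β = u β)
    (med : X → X → X → X)
    (hmed : ∀ a b c, dist a (med a b c) + dist b (med a b c) = dist a b ∧
        dist a (med a b c) + dist c (med a b c) = dist a c ∧
        dist b (med a b c) + dist c (med a b c) = dist b c)
    {p p' : ℝ} (hp0 : 0 ≤ p) (hpp' : p ≤ p') (hp'β : p' ≤ β)
    {Q : X} (hQu : dist (u p') Q = dist (u p') (v p') / 2)
    (hQv : dist (v p') Q = dist (u p') (v p') / 2)
    (hQy : dist Q (u β) = (β - p') * dist x₀ x₁ - dist (u p') (v p') / 2) :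
    dist (u p) (med (u p) (v p) Q) = dist (u p) (v p) / 2 ∧
    dist (v p) (med (u p) (v p) Q) = dist (u p) (v p) / 2 ∧
    dist (med (u p) (v p) Q) (u β) = (β - p) * dist x₀ x₁ - dist (u p) (v p) / 2 ∧
    dist (med (u p) (v p) Q) Q
      = (p' - p) * dist x₀ x₁ + dist (u p') (v p') / 2 - dist (u p) (v p) / 2 := by
  have hp'1 : p' ≤ 1 := hp'β.trans hβ
  have dup' : dist (u p) (u p') = (p' - p) * dist x₀ x₁ := prop_dist hu hp0 hpp' hp'1
  have dvp' : dist (v p) (v p') = (p' - p) * dist x₀ x₁ := prop_dist hv hp0 hpp' hp'1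
  have duy : dist (u p) (u β) = (β - p) * dist x₀ x₁ :=
    prop_dist hu hp0 (hpp'.trans hp'β) hβ
  have dvy : dist (v p) (u β) = (β - p) * dist x₀ x₁ := by
    rw [← hvβ]; exact prop_dist hv hp0 (hpp'.trans hp'β) hβ
  have dA : dist (u p) Q = (p' - p) * dist x₀ x₁ + dist (u p') (v p') / 2 := by
    have h1 : dist (u p) Q ≤ dist (u p) (u p') + dist (u p') Q := dist_triangle _ _ _
    have h2 : dist (u p) (u β) ≤ dist (u p) Q + dist Q (u β) := dist_triangle _ _ _
    rw [dup', hQu] at h1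
    rw [duy, hQy] at h2
    linarith
  have dB : dist (v p) Q = (p' - p) * dist x₀ x₁ + dist (u p') (v p') / 2 := by
    have h1 : dist (v p) Q ≤ dist (v p) (v p') + dist (v p') Q := dist_triangle _ _ _
    have h2 : dist (v p) (u β) ≤ dist (v p) Q + dist Q (u β) := dist_triangle _ _ _
    rw [dvp', hQv] at h1
    rw [dvy, hQy] at h2
    linarith
  obtain ⟨m1, m2, m3⟩ := hmed (u p) (v p) Q
  set M := med (u p) (v p) Q
  have e1 : dist (u p) M = dist (u p) (v p) / 2 := by linarith
  have e2 : dist (v p) M = dist (u p) (v p) / 2 := by linarith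
  have e4 : dist M Q = (p' - p) * dist x₀ x₁ + dist (u p') (v p') / 2
      - dist (u p) (v p) / 2 := by
    have h : dist Q M = dist M Q := dist_comm _ _
    linarith
  refine ⟨e1, e2, ?_, e4⟩
  have h1 : dist M (u β) ≤ dist M Q + dist Q (u β) := dist_triangle _ _ _
  have h2 : dist (u p) (u β) ≤ dist (u p) M + dist M (u β) := dist_triangle _ _ _
  rw [hQy] at h1
  rw [duy] at h2
  linarith

lemma prop_of_limit {X : Type*} [MetricSpace X] {x₀ x₁ : X} {u : ℝ → X} {f : ℕ → ℝ → X}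
    (hf : ∀ n, PropGeodesic x₀ x₁ (f n))
    (hlim : ∀ t, Filter.Tendsto (fun n => f n t) Filter.atTop (nhds (u t))) :
    PropGeodesic x₀ x₁ u := by
  have h0 : u 0 = x₀ := by
    have h : Filter.Tendsto (fun n => f n 0) Filter.atTop (nhds x₀) := by
      simpa [fun n => (hf n).1] using Filter.tendsto_const_nhds (α := ℕ) (a := x₀)
    exact tendsto_nhds_unique (hlim 0) h
  have h1 : u 1 = x₁ := by
    have h : Filter.Tendsto (fun n => f n 1) Filter.atTop (nhds x₁) := by
      simpa [fun n => (hf n).2.1] using Filter.tendsto_const_nhds (α := ℕ) (a := x₁)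
    exact tendsto_nhds_unique (hlim 1) h
  refine ⟨h0, h1, ?_⟩
  intro s hs t ht
  have hd : Filter.Tendsto (fun n => dist (f n s) (f n t)) Filter.atTop
      (nhds (dist (u s) (u t))) := (hlim s).dist (hlim t)
  have hc : (fun n => dist (f n s) (f n t)) = fun _ => |s - t| * dist x₀ x₁ := by
    funext n; exact (hf n).2.2 s hs t ht
  rw [hc] at hd
  exact tendsto_nhds_unique hd tendsto_const_nhds

lemma lip_glue {X : Type*} [MetricSpace X] {f : ℝ → X} {K p q r : ℝ}
    (h1 : ∀ σ τ, p ≤ σ → σ ≤ τ → τ ≤ q → dist (f σ) (f τ) ≤ (τ - σ) * K)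
    (h2 : ∀ σ τ, q ≤ σ → σ ≤ τ → τ ≤ r → dist (f σ) (f τ) ≤ (τ - σ) * K) :
    ∀ σ τ, p ≤ σ → σ ≤ τ → τ ≤ r → dist (f σ) (f τ) ≤ (τ - σ) * K := by
  intro σ τ hσ hστ hτ
  rcases le_total τ q with h | h
  · exact h1 σ τ hσ hστ h
  rcases le_total q σ with h' | h'
  · exact h2 σ τ h' hστ hτ
  calc dist (f σ) (f τ) ≤ dist (f σ) (f q) + dist (f q) (f τ) := dist_triangle _ _ _
    _ ≤ (q - σ) * K + (τ - q) * K := add_le_add (h1 σ q hσ h' le_rfl) (h2 q τ le_rfl h hτ)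
    _ = (τ - σ) * K := by ring

lemma lip_of_eq {X : Type*} [MetricSpace X] {f g : ℝ → X} {K p q : ℝ}
    (he : ∀ τ, p ≤ τ → τ ≤ q → f τ = g τ)
    (h : ∀ σ τ, p ≤ σ → σ ≤ τ → τ ≤ q → dist (g σ) (g τ) ≤ (τ - σ) * K) :
    ∀ σ τ, p ≤ σ → σ ≤ τ → τ ≤ q → dist (f σ) (f τ) ≤ (τ - σ) * K := by
  intro σ τ hσ hστ hτ
  rw [he σ hσ (hστ.trans hτ), he τ (hσ.trans hστ) hτ]
  exact h σ τ hσ hστ hτ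

lemma lip_gamma {X : Type*} [MetricSpace X] (Γf : ℝ → X) (x y : X)
    (hΓd : ∀ s ∈ Set.Icc (0:ℝ) (dist x y), ∀ t ∈ Set.Icc (0:ℝ) (dist x y),
      dist (Γf s) (Γf t) = |s - t|)
    {K p q : ℝ} (hK : 0 ≤ K) (hd : dist x y = (q - p) * K) :
    ∀ σ τ, p ≤ σ → σ ≤ τ → τ ≤ q →
      dist (Γf ((σ - p) * K)) (Γf ((τ - p) * K)) ≤ (τ - σ) * K := by
  intro σ τ hσ hστ hτ
  have m1 : (σ - p) * K ∈ Set.Icc (0:ℝ) (dist x y) := by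
    constructor
    · have : 0 ≤ σ - p := by linarith
      positivity
    · rw [hd]
      apply mul_le_mul_of_nonneg_right _ hK
      linarith
  have m2 : (τ - p) * K ∈ Set.Icc (0:ℝ) (dist x y) := by
    constructor
    · have : 0 ≤ τ - p := by linarith
      positivity
    · rw [hd]
      apply mul_le_mul_of_nonneg_right _ hK
      linarith
  rw [hΓd _ m1 _ m2]
  have he : (σ - p) * K - (τ - p) * K = -((τ - σ) * K) := by ring
  rw [he, abs_neg, abs_of_nonneg (by nlinarith)]

lemma lip_prop {X : Type*} [MetricSpace X] {x₀ x₁ : X} {g : ℝ → X}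
    (hg : PropGeodesic x₀ x₁ g) {p q : ℝ} (hp : 0 ≤ p) (hq : q ≤ 1) :
    ∀ σ τ, p ≤ σ → σ ≤ τ → τ ≤ q → dist (g σ) (g τ) ≤ (τ - σ) * dist x₀ x₁ :=
  fun σ τ h1 h2 h3 => le_of_eq (prop_dist hg (hp.trans h1) h2 (h3.trans hq))

/-- The main surgery step: between two proportional geodesics agreeing outside a
window, there is a chain of 6 proportional geodesics with consecutive windows of
size at most 5/6 of the original. -/
lemma step {x₀ x₁ : X} (hD : 0 < dist x₀ x₁)
    (Γ : X → X → ℝ → X)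
    (hΓ0 : ∀ x y, Γ x y 0 = x) (hΓ1 : ∀ x y, Γ x y (dist x y) = y)
    (hΓd : ∀ x y, ∀ s ∈ Set.Icc (0:ℝ) (dist x y), ∀ t ∈ Set.Icc (0:ℝ) (dist x y),
        dist (Γ x y s) (Γ x y t) = |s - t|)
    (med : X → X → X → X)
    (hmed : ∀ a b c, dist a (med a b c) + dist b (med a b c) = dist a b ∧
        dist a (med a b c) + dist c (med a b c) = dist a c ∧
        dist b (med a b c) + dist c (med a b c) = dist b c)
    (u v : ℝ → X) (hu : PropGeodesic x₀ x₁ u) (hv : PropGeodesic x₀ x₁ v)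
    (α β : ℝ) (hα : 0 ≤ α) (hαβ : α ≤ β) (hβ : β ≤ 1)
    (hagree : ∀ τ, τ ∉ Set.Ioo α β → u τ = v τ) :
    ∃ E : ℕ → ℝ → X,
      E 0 = u ∧ (∀ i, 6 ≤ i → E i = v) ∧ (u = v → ∀ i, E i = u) ∧
      ∀ i, PropGeodesic x₀ x₁ (E i) ∧
        ∃ α' β', α ≤ α' ∧ α' ≤ β' ∧ β' ≤ β ∧
          β' - α' ≤ 5 / 6 * (β - α) ∧
          ∀ τ, τ ∉ Set.Ioo α' β' → E i τ = E (i + 1) τ := by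
  classical
  by_cases huv : u = v
  · refine ⟨fun _ => u, rfl, fun i _ => huv ▸ rfl, fun _ _ => rfl, fun i => ?_⟩
    exact ⟨hu, β, β, hαβ, le_rfl, le_rfl, by linarith, fun τ _ => rfl⟩
  have hab : α < β := by
    rcases lt_or_eq_of_le hαβ with h | h
    · exact h
    · exfalso; apply huv; funext τ
      exact hagree τ (by rw [← h]; simp)
  -- MAIN CASE: α < β
  set D := dist x₀ x₁ with hDdef
  clear_value D
  set τ₁ := α + (β - α) / 3 with hτ₁
  set τ₂ := α + 2 * (β - α) / 3 with hτ₂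
  clear_value τ₁ τ₂
  have ht01 : α < τ₁ := by rw [hτ₁]; linarith
  have ht12 : τ₁ < τ₂ := by rw [hτ₁, hτ₂]; linarith
  have ht23 : τ₂ < β := by rw [hτ₂]; linarith
  have hτ₁0 : 0 ≤ τ₁ := le_of_lt (lt_of_le_of_lt hα ht01)
  have hτ₂0 : 0 ≤ τ₂ := le_of_lt (lt_of_le_of_lt hτ₁0 ht12)
  have hτ₁1 : τ₁ ≤ 1 := le_trans (le_of_lt (ht12.trans ht23)) hβ
  have hτ₂1 : τ₂ ≤ 1 := le_trans (le_of_lt ht23) hβ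
  have hvβ : v β = u β := (hagree β (by simp)).symm
  have hvα : v α = u α := (hagree α (by simp)).symm
  have hdβ : dist (u β) (v β) = 0 := by rw [hvβ]; simp
  have hdα : dist (u α) (v α) = 0 := by rw [hvα]; simp
  -- the median chain q₂, q₁, q₀ (towards u β)
  set a₁ := dist (u τ₁) (v τ₁) / 2 with ha₁
  set a₂ := dist (u τ₂) (v τ₂) / 2 with ha₂
  clear_value a₁ a₂
  have ha₁0 : 0 ≤ a₁ := by rw [ha₁]; positivity
  have ha₂0 : 0 ≤ a₂ := by rw [ha₂]; positivity
  set q₂ := med (u τ₂) (v τ₂) (u β) with hq₂def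
  set q₁ := med (u τ₁) (v τ₁) q₂ with hq₁def
  set q₀ := med (u α) (v α) q₁ with hq₀def
  clear_value q₂ q₁ q₀
  have hq2 := stepdown hu hv hβ hvβ med hmed (p := τ₂) (p' := β)
      hτ₂0 (le_of_lt ht23) le_rfl
      (Q := u β) (by simp [hdβ]) (by rw [hvβ]; simp [hdβ]) (by simp [hdβ])
  rw [← hq₂def, ← hDdef, hdβ, ← ha₂] at hq2
  obtain ⟨hq2u, hq2v, hq2y, hq2d⟩ := hq2
  have hq1 := stepdown hu hv hβ hvβ med hmed (p := τ₁) (p' := τ₂)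
      hτ₁0 (le_of_lt ht12) (le_of_lt ht23)
      (Q := q₂) (by rw [ha₂] at hq2u; exact hq2u) (by rw [ha₂] at hq2v; exact hq2v)
      (by rw [ha₂, hDdef] at hq2y; exact hq2y)
  rw [← hq₁def, ← hDdef, ← ha₁, ← ha₂] at hq1
  obtain ⟨hq1u, hq1v, hq1y, hq1d⟩ := hq1
  have hq0 := stepdown hu hv hβ hvβ med hmed (p := α) (p' := τ₁)
      hα (le_of_lt ht01) (le_of_lt (ht12.trans ht23))
      (Q := q₁) (by rw [ha₁] at hq1u; exact hq1u) (by rw [ha₁] at hq1v; exact hq1v)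
      (by rw [ha₁, hDdef] at hq1y; exact hq1y)
  rw [← hq₀def, ← hDdef, hdα, ← ha₁] at hq0
  obtain ⟨hq0u, hq0v, hq0y, hq0d⟩ := hq0
  have hq0eq : q₀ = u α := by
    have h : dist (u α) q₀ = 0 := by rw [hq0u]; simp
    rw [dist_comm] at h; exact dist_eq_zero.mp h
  -- bounds on a₁, a₂
  have habound : ∀ p, α ≤ p → p ≤ β →
      dist (u p) (v p) / 2 ≤ (p - α) * D ∧ dist (u p) (v p) / 2 ≤ (β - p) * D := by
    intro p hp1 hp2
    have hp0 : 0 ≤ p := hα.trans hp1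
    have hp1' : p ≤ 1 := hp2.trans hβ
    constructor
    · have t1 : dist (u p) (v p) ≤ dist (u p) (u α) + dist (u α) (v p) := dist_triangle _ _ _
      have e1 : dist (u p) (u α) = (p - α) * D := by
        rw [dist_comm, hDdef]; exact prop_dist hu hα hp1 hp1'
      have e2 : dist (u α) (v p) = (p - α) * D := by
        rw [← hvα, hDdef]; exact prop_dist hv hα hp1 hp1'
      rw [e1, e2] at t1; linarith
    · have t1 : dist (u p) (v p) ≤ dist (u p) (u β) + dist (u β) (v p) := dist_triangle _ _ _
      have e1 : dist (u p) (u β) = (β - p) * D := by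
        rw [hDdef]; exact prop_dist hu hp0 hp2 hβ
      have e2 : dist (u β) (v p) = (β - p) * D := by
        rw [← hvβ, dist_comm, hDdef]; exact prop_dist hv hp0 hp2 hβ
      rw [e1, e2] at t1; linarith
  have ha₁b : a₁ ≤ (τ₁ - α) * D := by
    have h := (habound τ₁ (le_of_lt ht01) (le_of_lt (ht12.trans ht23))).1
    rw [← ha₁] at h; exact h
  have ha₂b : a₂ ≤ (β - τ₂) * D := by
    have h := (habound τ₂ (le_of_lt (ht01.trans ht12)) (le_of_lt ht23)).2
    rw [← ha₂] at h; exact h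
  -- the partition points π₁, π₂
  set π₁ := τ₁ + a₁ / D with hπ₁def
  set π₂ := τ₂ + a₂ / D with hπ₂def
  clear_value π₁ π₂
  have hπ₁a : τ₁ ≤ π₁ := by
    have h : 0 ≤ a₁ / D := by positivity
    rw [hπ₁def]; linarith
  have hπ₂a : τ₂ ≤ π₂ := by
    have h : 0 ≤ a₂ / D := by positivity
    rw [hπ₂def]; linarith
  have hπ₁b : π₁ ≤ τ₂ := by
    have h1 : a₁ / D ≤ τ₁ - α := by rw [div_le_iff₀ hD]; linarith
    rw [hπ₁def, hτ₁, hτ₂] at *; linarith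
  have hπ₂b : π₂ ≤ β := by
    have h1 : a₂ / D ≤ β - τ₂ := by rw [div_le_iff₀ hD]; linarith
    rw [hπ₂def]; linarith
  have hπ₁D : (π₁ - τ₁) * D = a₁ := by rw [hπ₁def]; field_simp; ring
  have hπ₂D : (π₂ - τ₂) * D = a₂ := by rw [hπ₂def]; field_simp; ring
  -- consecutive distances along the chain
  have dq01 : dist q₀ q₁ = (π₁ - α) * D := by
    rw [hq0d, hπ₁def]; field_simp; ring
  have dq12 : dist q₁ q₂ = (π₂ - π₁) * D := by
    rw [hq1d, hπ₁def, hπ₂def]; field_simp; ring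
  have dq23 : dist q₂ (u β) = (β - π₂) * D := by
    rw [hq2d, hπ₂def]; field_simp; ring
  have hπ₁π₂ : π₁ ≤ π₂ := hπ₁b.trans hπ₂a
  have hD0 : (0:ℝ) ≤ D := le_of_lt hD
  -- the shared tail function
  set tail : ℝ → X := fun τ =>
    if τ ≤ π₁ then Γ q₀ q₁ ((τ - α) * D)
    else if τ ≤ π₂ then Γ q₁ q₂ ((τ - π₁) * D)
    else Γ q₂ (u β) ((τ - π₂) * D) with htail
  clear_value tail
  have tail1 : ∀ τ, τ ≤ π₁ → tail τ = Γ q₀ q₁ ((τ - α) * D) := by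
    intro τ h; rw [htail]; simp only [if_pos h]
  have tail2 : ∀ τ, π₁ ≤ τ → τ ≤ π₂ → tail τ = Γ q₁ q₂ ((τ - π₁) * D) := by
    intro τ h1 h2; rw [htail]; simp only
    by_cases h : τ ≤ π₁
    · have hττ : τ = π₁ := le_antisymm h h1
      rw [if_pos h, hττ, ← dq01, hΓ1]
      simp [hΓ0]
    · rw [if_neg h, if_pos h2]
  have tail3 : ∀ τ, π₂ ≤ τ → tail τ = Γ q₂ (u β) ((τ - π₂) * D) := by
    intro τ h2; rw [htail]; simp only
    by_cases h : τ ≤ π₁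
    · have e1 : τ = π₂ := le_antisymm (h.trans hπ₁π₂) h2
      have e2 : π₁ = π₂ := le_antisymm hπ₁π₂ (h2.trans h)
      have hq12 : q₁ = q₂ := by
        have hz : dist q₁ q₂ = 0 := by rw [dq12, ← e2]; ring
        exact dist_eq_zero.mp hz
      have harg : (τ - α) * D = dist q₀ q₁ := by rw [dq01, e1, e2]
      rw [if_pos h, harg, hΓ1, hq12, e1]
      simp [hΓ0]
    · by_cases h' : τ ≤ π₂
      · have e1 : τ = π₂ := le_antisymm h' h2
        have harg : (τ - π₁) * D = dist q₁ q₂ := by rw [dq12, e1]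
        rw [if_neg h, if_pos h', harg, hΓ1, e1]
        simp [hΓ0]
      · rw [if_neg h, if_neg h']
  -- slice builders
  set S2 : (ℝ → X) → ℝ → X := fun g τ =>
    if τ ≤ τ₂ ∨ β ≤ τ then g τ
    else if τ ≤ π₂ then Γ (g τ₂) q₂ ((τ - τ₂) * D) else tail τ with hS2
  set S1 : (ℝ → X) → ℝ → X := fun g τ =>
    if τ ≤ τ₁ ∨ β ≤ τ then g τ
    else if τ ≤ π₁ then Γ (g τ₁) q₁ ((τ - τ₁) * D) else tail τ with hS1
  set S0 : (ℝ → X) → ℝ → X := fun g τ =>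
    if τ ≤ α ∨ β ≤ τ then g τ else tail τ with hS0
  clear_value S2 S1 S0
  -- generic slice lemmas
  have SLICE : ∀ g : ℝ → X, PropGeodesic x₀ x₁ g → g α = u α → g β = u β →
      dist (g τ₁) q₁ = a₁ → dist (g τ₂) q₂ = a₂ →
      (PropGeodesic x₀ x₁ (S2 g) ∧ PropGeodesic x₀ x₁ (S1 g) ∧ PropGeodesic x₀ x₁ (S0 g)) ∧
      ((∀ τ, τ ∉ Set.Ioo τ₂ β → g τ = S2 g τ) ∧
       (∀ τ, τ ∉ Set.Ioo τ₁ π₂ → S2 g τ = S1 g τ) ∧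
       (∀ τ, τ ∉ Set.Ioo α π₁ → S1 g τ = S0 g τ)) := by
    intro g Pg hgα hgβ hgq1 hgq2
    -- value lemmas
    have s2a : ∀ τ, (τ ≤ τ₂ ∨ β ≤ τ) → S2 g τ = g τ := by
      intro τ h; rw [hS2]; simp only [if_pos h]
    have s1a : ∀ τ, (τ ≤ τ₁ ∨ β ≤ τ) → S1 g τ = g τ := by
      intro τ h; rw [hS1]; simp only [if_pos h]
    have s0a : ∀ τ, (τ ≤ α ∨ β ≤ τ) → S0 g τ = g τ := by
      intro τ h; rw [hS0]; simp only [if_pos h]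
    have s2c : ∀ τ, τ₂ ≤ τ → τ ≤ π₂ → S2 g τ = Γ (g τ₂) q₂ ((τ - τ₂) * D) := by
      intro τ h1 h2; rw [hS2]; simp only
      by_cases hc : τ ≤ τ₂ ∨ β ≤ τ
      · rcases hc with hc | hc
        · have e : τ = τ₂ := le_antisymm hc h1
          rw [if_pos (Or.inl hc), e]
          simp [hΓ0]
        · have e : τ = β := le_antisymm ((h2.trans hπ₂b)) hc
          have e2 : π₂ = β := le_antisymm hπ₂b (by rw [← e]; exact h2)
          have harg : (τ - τ₂) * D = dist (g τ₂) q₂ := by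
            rw [hgq2, ← hπ₂D, e, e2]
          have hq2β : q₂ = u β := by
            have hz : dist q₂ (u β) = 0 := by rw [dq23, e2]; ring
            exact dist_eq_zero.mp hz
          rw [if_pos (Or.inr hc), harg, hΓ1, hq2β, e, hgβ]
      · rw [if_neg hc, if_pos h2]
    have s2t : ∀ τ, π₂ ≤ τ → τ ≤ β → S2 g τ = Γ q₂ (u β) ((τ - π₂) * D) := by
      intro τ h1 h2; rw [hS2]; simp only
      by_cases hc : τ ≤ τ₂ ∨ β ≤ τ
      · rcases hc with hc | hc
        · have e : τ = π₂ := le_antisymm (hc.trans hπ₂a) h1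
          have e2 : τ₂ = π₂ := le_antisymm hπ₂a (by rw [← e]; exact hc)
          have hgq2' : q₂ = g τ₂ := by
            have hz : dist (g τ₂) q₂ = 0 := by rw [hgq2, ← hπ₂D, ← e2]; ring
            exact (dist_eq_zero.mp hz).symm
          rw [if_pos (Or.inl hc), e, ← e2, ← hgq2']
          simp [hΓ0]
        · have e : τ = β := le_antisymm h2 hc
          have harg : (τ - π₂) * D = dist q₂ (u β) := by rw [dq23, e]
          rw [if_pos (Or.inr hc), harg, hΓ1, e, hgβ]
      · by_cases h' : τ ≤ π₂
        · have e : τ = π₂ := le_antisymm h' h1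
          have harg : (τ - τ₂) * D = dist (g τ₂) q₂ := by rw [hgq2, ← hπ₂D, e]
          rw [if_neg hc, if_pos h', harg, hΓ1, e]
          simp [hΓ0]
        · rw [if_neg hc, if_neg h']
          exact tail3 τ h1
    have s1c : ∀ τ, τ₁ ≤ τ → τ ≤ π₁ → S1 g τ = Γ (g τ₁) q₁ ((τ - τ₁) * D) := by
      intro τ h1 h2; rw [hS1]; simp only
      by_cases hc : τ ≤ τ₁ ∨ β ≤ τ
      · rcases hc with hc | hc
        · have e : τ = τ₁ := le_antisymm hc h1
          rw [if_pos (Or.inl hc), e]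
          simp [hΓ0]
        · exfalso
          have : τ ≤ τ₂ := h2.trans hπ₁b
          linarith
      · rw [if_neg hc, if_pos h2]
    have s1t2 : ∀ τ, π₁ ≤ τ → τ ≤ π₂ → S1 g τ = Γ q₁ q₂ ((τ - π₁) * D) := by
      intro τ h1 h2; rw [hS1]; simp only
      by_cases hc : τ ≤ τ₁ ∨ β ≤ τ
      · rcases hc with hc | hc
        · have e : τ = π₁ := le_antisymm (hc.trans hπ₁a) h1
          have e2 : τ₁ = π₁ := le_antisymm hπ₁a (by rw [← e]; exact hc)
          have hgq1' : q₁ = g τ₁ := by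
            have hz : dist (g τ₁) q₁ = 0 := by rw [hgq1, ← hπ₁D, ← e2]; ring
            exact (dist_eq_zero.mp hz).symm
          rw [if_pos (Or.inl hc), e, ← e2, ← hgq1']
          simp [hΓ0]
        · have e : τ = β := le_antisymm (h2.trans hπ₂b) hc
          have e2 : π₂ = β := le_antisymm hπ₂b (by rw [← e]; exact h2)
          have harg : (τ - π₁) * D = dist q₁ q₂ := by rw [dq12, e, e2]
          have hq2β : q₂ = u β := by
            have hz : dist q₂ (u β) = 0 := by rw [dq23, e2]; ring
            exact dist_eq_zero.mp hz
          rw [if_pos (Or.inr hc), harg, hΓ1, hq2β, e, hgβ]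
      · by_cases h' : τ ≤ π₁
        · have e : τ = π₁ := le_antisymm h' h1
          have harg : (τ - τ₁) * D = dist (g τ₁) q₁ := by rw [hgq1, ← hπ₁D, e]
          rw [if_neg hc, if_pos h', harg, hΓ1, e]
          simp [hΓ0]
        · rw [if_neg hc, if_neg h']
          exact tail2 τ (le_of_not_ge h') h2
    have s1t3 : ∀ τ, π₂ ≤ τ → τ ≤ β → S1 g τ = Γ q₂ (u β) ((τ - π₂) * D) := by
      intro τ h1 h2; rw [hS1]; simp only
      by_cases hc : τ ≤ τ₁ ∨ β ≤ τ
      · rcases hc with hc | hc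
        · have e1 : τ₁ = π₁ := le_antisymm hπ₁a (by linarith)
          have e2 : π₁ = π₂ := le_antisymm hπ₁π₂ (by linarith)
          have e3 : τ = π₂ := le_antisymm (by linarith) h1
          have hgq1' : q₁ = g τ₁ := by
            have hz : dist (g τ₁) q₁ = 0 := by rw [hgq1, ← hπ₁D, ← e1]; ring
            exact (dist_eq_zero.mp hz).symm
          have hq12 : q₁ = q₂ := by
            have hz : dist q₁ q₂ = 0 := by rw [dq12, ← e2]; ring
            exact dist_eq_zero.mp hz
          rw [if_pos (Or.inl hc), e3, ← e2, ← e1, ← hgq1', hq12]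
          simp [hΓ0]
        · have e : τ = β := le_antisymm h2 hc
          have harg : (τ - π₂) * D = dist q₂ (u β) := by rw [dq23, e]
          rw [if_pos (Or.inr hc), harg, hΓ1, e, hgβ]
      · by_cases h' : τ ≤ π₁
        · have e : τ = π₂ := le_antisymm (h'.trans hπ₁π₂) h1
          have e2 : π₁ = π₂ := le_antisymm hπ₁π₂ (h1.trans h')
          have hq12 : q₁ = q₂ := by
            have hz : dist q₁ q₂ = 0 := by rw [dq12, ← e2]; ring
            exact dist_eq_zero.mp hz
          have harg : (τ - τ₁) * D = dist (g τ₁) q₁ := by rw [hgq1, ← hπ₁D, e, e2]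
          rw [if_neg hc, if_pos h', harg, hΓ1, hq12, e]
          simp [hΓ0]
        · rw [if_neg hc, if_neg h']
          exact tail3 τ h1
    have s0t1 : ∀ τ, α ≤ τ → τ ≤ π₁ → S0 g τ = Γ q₀ q₁ ((τ - α) * D) := by
      intro τ h1 h2; rw [hS0]; simp only
      by_cases hc : τ ≤ α ∨ β ≤ τ
      · rcases hc with hc | hc
        · have e : τ = α := le_antisymm hc h1
          rw [if_pos (Or.inl hc), e, hgα, ← hq0eq]
          simp [hΓ0]
        · exfalso
          have h3 : π₁ < β := lt_of_le_of_lt hπ₁b ht23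
          linarith
      · rw [if_neg hc]; exact tail1 τ h2
    have s0t2 : ∀ τ, π₁ ≤ τ → τ ≤ π₂ → S0 g τ = Γ q₁ q₂ ((τ - π₁) * D) := by
      intro τ h1 h2; rw [hS0]; simp only
      by_cases hc : τ ≤ α ∨ β ≤ τ
      · rcases hc with hc | hc
        · exfalso; linarith [hπ₁a, ht01]
        · have e : τ = β := le_antisymm (h2.trans hπ₂b) hc
          have e2 : π₂ = β := le_antisymm hπ₂b (by rw [← e]; exact h2)
          have harg : (τ - π₁) * D = dist q₁ q₂ := by rw [dq12, e, e2]
          have hq2β : q₂ = u β := by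
            have hz : dist q₂ (u β) = 0 := by rw [dq23, e2]; ring
            exact dist_eq_zero.mp hz
          rw [if_pos (Or.inr hc), harg, hΓ1, hq2β, e, hgβ]
      · rw [if_neg hc]; exact tail2 τ h1 h2
    have s0t3 : ∀ τ, π₂ ≤ τ → τ ≤ β → S0 g τ = Γ q₂ (u β) ((τ - π₂) * D) := by
      intro τ h1 h2; rw [hS0]; simp only
      by_cases hc : τ ≤ α ∨ β ≤ τ
      · rcases hc with hc | hc
        · exfalso; linarith [hπ₁a, hπ₁π₂, ht01]
        · have e : τ = β := le_antisymm h2 hc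
          have harg : (τ - π₂) * D = dist q₂ (u β) := by rw [dq23, e]
          rw [if_pos (Or.inr hc), harg, hΓ1, e, hgβ]
      · rw [if_neg hc]; exact tail3 τ h1
    -- Lipschitz property of g in terms of D
    have glip : ∀ p q : ℝ, 0 ≤ p → q ≤ 1 → ∀ σ τ, p ≤ σ → σ ≤ τ → τ ≤ q →
        dist (g σ) (g τ) ≤ (τ - σ) * D := by
      intro p q hp hq
      have h := lip_prop Pg hp hq
      rwa [← hDdef] at h
    have hβ0 : (0:ℝ) ≤ β := hα.trans hαβ
    -- geodesy of S2 g
    have P2 : PropGeodesic x₀ x₁ (S2 g) := by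
      have pc1 : ∀ σ τ, (0:ℝ) ≤ σ → σ ≤ τ → τ ≤ τ₂ → dist (S2 g σ) (S2 g τ) ≤ (τ - σ) * D :=
        lip_of_eq (fun τ _ h2 => s2a τ (Or.inl h2)) (glip 0 τ₂ le_rfl hτ₂1)
      have pc2 : ∀ σ τ, τ₂ ≤ σ → σ ≤ τ → τ ≤ π₂ → dist (S2 g σ) (S2 g τ) ≤ (τ - σ) * D :=
        lip_of_eq (fun τ h1 h2 => s2c τ h1 h2)
          (lip_gamma (Γ (g τ₂) q₂) (g τ₂) q₂ (hΓd _ _) (K := D) (p := τ₂) (q := π₂) hD0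
            (by rw [hgq2]; exact hπ₂D.symm))
      have pc3 : ∀ σ τ, π₂ ≤ σ → σ ≤ τ → τ ≤ β → dist (S2 g σ) (S2 g τ) ≤ (τ - σ) * D :=
        lip_of_eq (fun τ h1 h2 => s2t τ h1 h2)
          (lip_gamma (Γ q₂ (u β)) q₂ (u β) (hΓd _ _) (K := D) (p := π₂) (q := β) hD0 dq23)
      have pc4 : ∀ σ τ, β ≤ σ → σ ≤ τ → τ ≤ 1 → dist (S2 g σ) (S2 g τ) ≤ (τ - σ) * D :=
        lip_of_eq (fun τ h1 _ => s2a τ (Or.inr h1)) (glip β 1 hβ0 le_rfl)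
      apply prop_of_lip
      · rw [s2a 0 (Or.inl hτ₂0)]; exact Pg.1
      · rw [s2a 1 (Or.inr hβ)]; exact Pg.2.1
      · intro s t hs hst ht
        rw [← hDdef]
        exact lip_glue (lip_glue (lip_glue pc1 pc2) pc3) pc4 s t hs hst ht
    -- geodesy of S1 g
    have P1 : PropGeodesic x₀ x₁ (S1 g) := by
      have pc1 : ∀ σ τ, (0:ℝ) ≤ σ → σ ≤ τ → τ ≤ τ₁ → dist (S1 g σ) (S1 g τ) ≤ (τ - σ) * D :=
        lip_of_eq (fun τ _ h2 => s1a τ (Or.inl h2)) (glip 0 τ₁ le_rfl hτ₁1)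
      have pc2 : ∀ σ τ, τ₁ ≤ σ → σ ≤ τ → τ ≤ π₁ → dist (S1 g σ) (S1 g τ) ≤ (τ - σ) * D :=
        lip_of_eq (fun τ h1 h2 => s1c τ h1 h2)
          (lip_gamma (Γ (g τ₁) q₁) (g τ₁) q₁ (hΓd _ _) (K := D) (p := τ₁) (q := π₁) hD0
            (by rw [hgq1]; exact hπ₁D.symm))
      have pc3 : ∀ σ τ, π₁ ≤ σ → σ ≤ τ → τ ≤ π₂ → dist (S1 g σ) (S1 g τ) ≤ (τ - σ) * D :=
        lip_of_eq (fun τ h1 h2 => s1t2 τ h1 h2)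
          (lip_gamma (Γ q₁ q₂) q₁ q₂ (hΓd _ _) (K := D) (p := π₁) (q := π₂) hD0 dq12)
      have pc4 : ∀ σ τ, π₂ ≤ σ → σ ≤ τ → τ ≤ β → dist (S1 g σ) (S1 g τ) ≤ (τ - σ) * D :=
        lip_of_eq (fun τ h1 h2 => s1t3 τ h1 h2)
          (lip_gamma (Γ q₂ (u β)) q₂ (u β) (hΓd _ _) (K := D) (p := π₂) (q := β) hD0 dq23)
      have pc5 : ∀ σ τ, β ≤ σ → σ ≤ τ → τ ≤ 1 → dist (S1 g σ) (S1 g τ) ≤ (τ - σ) * D :=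
        lip_of_eq (fun τ h1 _ => s1a τ (Or.inr h1)) (glip β 1 hβ0 le_rfl)
      apply prop_of_lip
      · rw [s1a 0 (Or.inl hτ₁0)]; exact Pg.1
      · rw [s1a 1 (Or.inr hβ)]; exact Pg.2.1
      · intro s t hs hst ht
        rw [← hDdef]
        exact lip_glue (lip_glue (lip_glue (lip_glue pc1 pc2) pc3) pc4) pc5 s t hs hst ht
    -- geodesy of S0 g
    have P0 : PropGeodesic x₀ x₁ (S0 g) := by
      have pc1 : ∀ σ τ, (0:ℝ) ≤ σ → σ ≤ τ → τ ≤ α → dist (S0 g σ) (S0 g τ) ≤ (τ - σ) * D :=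
        lip_of_eq (fun τ _ h2 => s0a τ (Or.inl h2)) (glip 0 α le_rfl (hαβ.trans hβ))
      have pc2 : ∀ σ τ, α ≤ σ → σ ≤ τ → τ ≤ π₁ → dist (S0 g σ) (S0 g τ) ≤ (τ - σ) * D :=
        lip_of_eq (fun τ h1 h2 => s0t1 τ h1 h2)
          (lip_gamma (Γ q₀ q₁) q₀ q₁ (hΓd _ _) (K := D) (p := α) (q := π₁) hD0 dq01)
      have pc3 : ∀ σ τ, π₁ ≤ σ → σ ≤ τ → τ ≤ π₂ → dist (S0 g σ) (S0 g τ) ≤ (τ - σ) * D :=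
        lip_of_eq (fun τ h1 h2 => s0t2 τ h1 h2)
          (lip_gamma (Γ q₁ q₂) q₁ q₂ (hΓd _ _) (K := D) (p := π₁) (q := π₂) hD0 dq12)
      have pc4 : ∀ σ τ, π₂ ≤ σ → σ ≤ τ → τ ≤ β → dist (S0 g σ) (S0 g τ) ≤ (τ - σ) * D :=
        lip_of_eq (fun τ h1 h2 => s0t3 τ h1 h2)
          (lip_gamma (Γ q₂ (u β)) q₂ (u β) (hΓd _ _) (K := D) (p := π₂) (q := β) hD0 dq23)
      have pc5 : ∀ σ τ, β ≤ σ → σ ≤ τ → τ ≤ 1 → dist (S0 g σ) (S0 g τ) ≤ (τ - σ) * D :=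
        lip_of_eq (fun τ h1 _ => s0a τ (Or.inr h1)) (glip β 1 hβ0 le_rfl)
      apply prop_of_lip
      · rw [s0a 0 (Or.inl hα)]; exact Pg.1
      · rw [s0a 1 (Or.inr hβ)]; exact Pg.2.1
      · intro s t hs hst ht
        rw [← hDdef]
        exact lip_glue (lip_glue (lip_glue (lip_glue pc1 pc2) pc3) pc4) pc5 s t hs hst ht
    -- agreements
    have Aa : ∀ τ, τ ∉ Set.Ioo τ₂ β → g τ = S2 g τ := by
      intro τ h
      rw [Set.mem_Ioo, not_and_or, not_lt, not_lt] at h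
      exact (s2a τ h).symm
    have Ab : ∀ τ, τ ∉ Set.Ioo τ₁ π₂ → S2 g τ = S1 g τ := by
      intro τ h
      rw [Set.mem_Ioo, not_and_or, not_lt, not_lt] at h
      rcases h with h | h
      · rw [s2a τ (Or.inl (h.trans (le_of_lt ht12))), s1a τ (Or.inl h)]
      · rcases le_total τ β with h' | h'
        · rw [s2t τ h h', s1t3 τ h h']
        · rw [s2a τ (Or.inr h'), s1a τ (Or.inr h')]
    have Ac : ∀ τ, τ ∉ Set.Ioo α π₁ → S1 g τ = S0 g τ := by
      intro τ h
      rw [Set.mem_Ioo, not_and_or, not_lt, not_lt] at h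
      rcases h with h | h
      · rw [s1a τ (Or.inl (h.trans (le_of_lt ht01))), s0a τ (Or.inl h)]
      · rcases le_total τ π₂ with h' | h'
        · rw [s1t2 τ h h', s0t2 τ h h']
        · rcases le_total τ β with h'' | h''
          · rw [s1t3 τ h' h'', s0t3 τ h' h'']
          · rw [s1a τ (Or.inr h''), s0a τ (Or.inr h'')]
    exact ⟨⟨P2, P1, P0⟩, Aa, Ab, Ac⟩
  -- instantiate for u and v
  obtain ⟨⟨PU2, PU1, PU0⟩, AUa, AUb, AUc⟩ := SLICE u hu rfl rfl hq1u hq2u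
  obtain ⟨⟨PV2, PV1, PV0⟩, AVa, AVb, AVc⟩ := SLICE v hv hvα hvβ hq1v hq2v
  have hS0uv : S0 u = S0 v := by
    funext τ
    rw [hS0]; simp only
    by_cases hc : τ ≤ α ∨ β ≤ τ
    · rw [if_pos hc, if_pos hc]
      apply hagree
      rw [Set.mem_Ioo, not_and_or, not_lt, not_lt]
      exact hc
    · rw [if_neg hc, if_neg hc]
  -- window bounds
  have hατ₂ : α ≤ τ₂ := le_of_lt (ht01.trans ht12)
  have hτ₁π₂ : τ₁ ≤ π₂ := hπ₁a.trans hπ₁π₂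
  have hαπ₁ : α ≤ π₁ := le_of_lt (lt_of_lt_of_le ht01 hπ₁a)
  have hπ₁β : π₁ ≤ β := hπ₁b.trans (le_of_lt ht23)
  have hπ₂β : π₂ ≤ β := hπ₂b
  have w1 : β - τ₂ ≤ 5 / 6 * (β - α) := by rw [hτ₂]; linarith
  have w2 : π₂ - τ₁ ≤ 5 / 6 * (β - α) := by rw [hτ₁] at *; linarith
  have w3 : π₁ - α ≤ 5 / 6 * (β - α) := by rw [hτ₂] at hπ₁b; linarith
  -- assemble the chain
  refine ⟨fun i => if i = 0 then u else if i = 1 then S2 u else if i = 2 then S1 u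
      else if i = 3 then S0 u else if i = 4 then S1 v else if i = 5 then S2 v else v,
      by simp, ?_, fun h => absurd h huv, ?_⟩
  · intro i hi
    simp only [if_neg (show ¬ i = 0 by omega), if_neg (show ¬ i = 1 by omega),
      if_neg (show ¬ i = 2 by omega), if_neg (show ¬ i = 3 by omega),
      if_neg (show ¬ i = 4 by omega), if_neg (show ¬ i = 5 by omega)]
  · intro i
    match i with
    | 0 =>
      refine ⟨by simpa using hu, τ₂, β, hατ₂, le_of_lt ht23, le_rfl, w1, fun τ hτ => ?_⟩
      simpa using AUa τ hτ
    | 1 =>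
      refine ⟨by simpa using PU2, τ₁, π₂, le_of_lt ht01, hτ₁π₂, hπ₂β, w2, fun τ hτ => ?_⟩
      simpa using AUb τ hτ
    | 2 =>
      refine ⟨by simpa using PU1, α, π₁, le_rfl, hαπ₁, hπ₁β, w3, fun τ hτ => ?_⟩
      simpa using AUc τ hτ
    | 3 =>
      refine ⟨by simpa using PU0, α, π₁, le_rfl, hαπ₁, hπ₁β, w3, fun τ hτ => ?_⟩
      have h1 : S1 v τ = S0 v τ := AVc τ hτ
      have h2 : S0 u τ = S0 v τ := by rw [hS0uv]
      simpa using h2.trans h1.symm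
    | 4 =>
      refine ⟨by simpa using PV1, τ₁, π₂, le_of_lt ht01, hτ₁π₂, hπ₂β, w2, fun τ hτ => ?_⟩
      simpa using (AVb τ hτ).symm
    | 5 =>
      refine ⟨by simpa using PV2, τ₂, β, hατ₂, le_of_lt ht23, le_rfl, w1, fun τ hτ => ?_⟩
      simpa using (AVa τ hτ).symm
    | (n + 6) =>
      refine ⟨?_, β, β, hαβ, le_rfl, le_rfl, by linarith, fun τ _ => ?_⟩
      · simp only [if_neg (show ¬ n + 6 = 0 by omega), if_neg (show ¬ n + 6 = 1 by omega),
          if_neg (show ¬ n + 6 = 2 by omega), if_neg (show ¬ n + 6 = 3 by omega),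
          if_neg (show ¬ n + 6 = 4 by omega), if_neg (show ¬ n + 6 = 5 by omega)]
        exact hv
      · simp only [if_neg (show ¬ n + 6 = 0 by omega), if_neg (show ¬ n + 6 = 1 by omega),
          if_neg (show ¬ n + 6 = 2 by omega), if_neg (show ¬ n + 6 = 3 by omega),
          if_neg (show ¬ n + 6 = 4 by omega), if_neg (show ¬ n + 6 = 5 by omega),
          if_neg (show ¬ n + 6 + 1 = 0 by omega), if_neg (show ¬ n + 6 + 1 = 1 by omega),
          if_neg (show ¬ n + 6 + 1 = 2 by omega), if_neg (show ¬ n + 6 + 1 = 3 by omega),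
          if_neg (show ¬ n + 6 + 1 = 4 by omega), if_neg (show ¬ n + 6 + 1 = 5 by omega)]




lemma levels {X : Type*} [MetricSpace X] {x₀ x₁ : X} (hD : 0 < dist x₀ x₁)
    (Γ : X → X → ℝ → X)
    (hΓ0 : ∀ x y, Γ x y 0 = x) (hΓ1 : ∀ x y, Γ x y (dist x y) = y)
    (hΓd : ∀ x y, ∀ s ∈ Set.Icc (0:ℝ) (dist x y), ∀ t ∈ Set.Icc (0:ℝ) (dist x y),
        dist (Γ x y s) (Γ x y t) = |s - t|)
    (med : X → X → X → X)
    (hmed : ∀ a b c, dist a (med a b c) + dist b (med a b c) = dist a b ∧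
        dist a (med a b c) + dist c (med a b c) = dist a c ∧
        dist b (med a b c) + dist c (med a b c) = dist b c)
    (c₀' c₁' : ℝ → X) (h₀' : PropGeodesic x₀ x₁ c₀') (h₁' : PropGeodesic x₀ x₁ c₁')
    (hag : ∀ τ, τ ∉ Set.Ioo (0:ℝ) 1 → c₀' τ = c₁' τ) :
    ∃ S : ℕ → ℕ → ℝ → X, ∃ A B : ℕ → ℕ → ℝ,
      (∀ n k, PropGeodesic x₀ x₁ (S n k)) ∧
      (∀ n, S n 0 = c₀') ∧
      (∀ n k, 6^n ≤ k → S n k = c₁') ∧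
      (∀ n k, S (n+1) (6*k) = S n k) ∧
      (∀ n k, 0 ≤ A n k ∧ A n k ≤ B n k ∧ B n k ≤ 1 ∧ B n k - A n k ≤ (5/6)^n ∧
        ∀ τ, τ ∉ Set.Ioo (A n k) (B n k) → S n k τ = S n (k+1) τ) := by
  classical
  set Good : (ℕ → ℝ → X) → (ℕ → ℝ) → (ℕ → ℝ) → ℕ → Prop := fun S A B n =>
    (∀ k, PropGeodesic x₀ x₁ (S k)) ∧ S 0 = c₀' ∧ (∀ k, 6^n ≤ k → S k = c₁') ∧
    (∀ k, 0 ≤ A k ∧ A k ≤ B k ∧ B k ≤ 1 ∧ B k - A k ≤ (5/6)^n ∧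
      ∀ τ, τ ∉ Set.Ioo (A k) (B k) → S k τ = S (k+1) τ) with hGood
  have base : Good (fun k => if k = 0 then c₀' else c₁')
      (fun k => if k = 0 then 0 else 1) (fun _ => 1) 0 := by
    simp only [hGood]
    refine ⟨?_, by simp, ?_, ?_⟩
    · intro k; by_cases h : k = 0 <;> simp [h, h₀', h₁']
    · intro k hk; rw [if_neg (by omega)]
    · intro k
      by_cases h : k = 0
      · subst h
        simp only [if_pos rfl]
        refine ⟨le_rfl, zero_le_one, le_rfl, by norm_num, ?_⟩
        intro τ hτ
        simpa using hag τ hτ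
      · rw [if_neg h]
        refine ⟨zero_le_one, le_rfl, le_rfl, by norm_num, ?_⟩
        intro τ _
        simp [h]
  have stepex : ∀ n (S : ℕ → ℝ → X) (A B : ℕ → ℝ), Good S A B n →
      ∃ (S' : ℕ → ℝ → X) (A' B' : ℕ → ℝ), Good S' A' B' (n+1) ∧ ∀ k, S' (6*k) = S k := by
    intro n S A B hG
    simp only [hGood] at hG
    obtain ⟨hgeo', hS0, htail, hwin⟩ := hG
    choose E hE0 hE6 hEc hEi using fun k =>
      step hD Γ hΓ0 hΓ1 hΓd med hmed (S k) (S (k+1)) (hgeo' k) (hgeo' (k+1))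
        (A k) (B k) (hwin k).1 (hwin k).2.1 (hwin k).2.2.1 (hwin k).2.2.2.2
    have H2 : ∀ k i, ∃ ab : ℝ × ℝ, A k ≤ ab.1 ∧ ab.1 ≤ ab.2 ∧ ab.2 ≤ B k ∧
        ab.2 - ab.1 ≤ 5/6*(B k - A k) ∧ ∀ τ, τ ∉ Set.Ioo ab.1 ab.2 → E k i τ = E k (i+1) τ := by
      intro k i
      obtain ⟨a', b', h⟩ := (hEi k i).2
      exact ⟨(a', b'), h⟩
    choose W hW using H2
    refine ⟨fun m => E (m/6) (m%6), fun m => (W (m/6) (m%6)).1, fun m => (W (m/6) (m%6)).2,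
      ?_, ?_⟩
    · simp only [hGood]
      refine ⟨fun m => (hEi (m/6) (m%6)).1, ?_, ?_, ?_⟩
      · show E (0/6) (0%6) = c₀'
        norm_num
        rw [hE0 0, hS0]
      · intro m hm
        have hj : 6^n ≤ m/6 := by
          rw [Nat.le_div_iff_mul_le (by norm_num)]
          calc 6^n * 6 = 6^(n+1) := by rw [pow_succ]
            _ ≤ m := hm
        have huv : S (m/6) = S (m/6 + 1) := by
          rw [htail _ hj, htail _ (by omega)]
        rw [hEc (m/6) huv (m%6), htail _ hj]
      · intro m
        have hr : m % 6 < 6 := Nat.mod_lt _ (by norm_num)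
        obtain ⟨w1, w2, w3, w4, w5⟩ := hW (m/6) (m%6)
        have hsz : (W (m/6) (m%6)).2 - (W (m/6) (m%6)).1 ≤ (5/6)^(n+1) := by
          have h1 := (hwin (m/6)).2.2.2.1
          calc (W (m/6) (m%6)).2 - (W (m/6) (m%6)).1 ≤ 5/6*(B (m/6) - A (m/6)) := w4
            _ ≤ 5/6*(5/6)^n := by linarith
            _ = (5/6)^(n+1) := by rw [pow_succ]; ring
        refine ⟨(hwin (m/6)).1.trans w1, w2, w3.trans (hwin (m/6)).2.2.1, hsz, ?_⟩
        intro τ hτ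
        by_cases h5 : m % 6 = 5
        · have e1 : (m+1)/6 = m/6 + 1 := by omega
          have e2 : (m+1)%6 = 0 := by omega
          show E (m/6) (m%6) τ = E ((m+1)/6) ((m+1)%6) τ
          rw [e1, e2, hE0 (m/6+1), ← hE6 (m/6) 6 le_rfl]
          have h := w5 τ hτ
          rw [show m%6 + 1 = 6 by omega] at h
          exact h
        · have e1 : (m+1)/6 = m/6 := by omega
          have e2 : (m+1)%6 = m%6 + 1 := by omega
          show E (m/6) (m%6) τ = E ((m+1)/6) ((m+1)%6) τ
          rw [e1, e2]
          exact w5 τ hτ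
    · intro k
      show E ((6*k)/6) ((6*k)%6) = S k
      have e1 : (6*k)/6 = k := by omega
      have e2 : (6*k)%6 = 0 := by omega
      rw [e1, e2, hE0]
  choose S' A' B' hG' hcompat using stepex
  let tower : (n : ℕ) → {T : (ℕ → ℝ → X) × (ℕ → ℝ) × (ℕ → ℝ) // Good T.1 T.2.1 T.2.2 n} :=
    fun n => Nat.rec
      ⟨⟨(fun k => if k = 0 then c₀' else c₁'), (fun k => if k = 0 then 0 else 1),
        (fun _ => 1)⟩, base⟩
      (fun m prev => ⟨⟨S' m prev.1.1 prev.1.2.1 prev.1.2.2 prev.2,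
                       A' m prev.1.1 prev.1.2.1 prev.1.2.2 prev.2,
                       B' m prev.1.1 prev.1.2.1 prev.1.2.2 prev.2⟩,
                      hG' m prev.1.1 prev.1.2.1 prev.1.2.2 prev.2⟩) n
  refine ⟨fun n => (tower n).1.1, fun n => (tower n).1.2.1, fun n => (tower n).1.2.2,
    ?_, ?_, ?_, ?_, ?_⟩
  · intro n k
    have h := (tower n).2
    simp only [hGood] at h
    exact h.1 k
  · intro n
    have h := (tower n).2
    simp only [hGood] at h
    exact h.2.1
  · intro n k hk
    have h := (tower n).2
    simp only [hGood] at h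
    exact h.2.2.1 k hk
  · intro n k
    exact hcompat n (tower n).1.1 (tower n).1.2.1 (tower n).1.2.2 (tower n).2 k
  · intro n k
    have h := (tower n).2
    simp only [hGood] at h
    exact h.2.2.2 k

theorem stmt12' {X : Type*} [MetricSpace X] [CompleteSpace X]
    (hgeo : GeodesicSpace X) (htri : TripodCond X)
    (x₀ x₁ : X) (c₀ c₁ : ℝ → X)
    (h₀ : PropGeodesic x₀ x₁ c₀) (h₁ : PropGeodesic x₀ x₁ c₁) :
    ∃ c : ℝ × ℝ → X,
      ContinuousOn c (Set.Icc (0:ℝ) 1 ×ˢ Set.Icc (0:ℝ) 1) ∧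
      (∀ t ∈ Set.Icc (0:ℝ) 1, c (t, 0) = c₀ t ∧ c (t, 1) = c₁ t) ∧
      (∀ s ∈ Set.Icc (0:ℝ) 1, PropGeodesic x₀ x₁ (fun t => c (t, s))) := by
  classical
  rcases eq_or_lt_of_le (dist_nonneg (x := x₀) (y := x₁)) with hD | hD
  · -- degenerate case : x₀ = x₁ and all geodesics are constant
    have hx : x₁ = x₀ := by
      have : dist x₀ x₁ = 0 := hD.symm
      exact (dist_eq_zero.mp this).symm
    have hc₀ : ∀ t ∈ Set.Icc (0:ℝ) 1, c₀ t = x₀ := by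
      intro t ht
      have h := h₀.2.2 t ht 0 ⟨le_rfl, zero_le_one⟩
      rw [h₀.1, ← hD] at h
      have : dist (c₀ t) x₀ = 0 := by rw [h]; ring
      exact dist_eq_zero.mp this
    have hc₁ : ∀ t ∈ Set.Icc (0:ℝ) 1, c₁ t = x₀ := by
      intro t ht
      have h := h₁.2.2 t ht 0 ⟨le_rfl, zero_le_one⟩
      rw [h₁.1, ← hD] at h
      have : dist (c₁ t) x₀ = 0 := by rw [h]; ring
      exact dist_eq_zero.mp this
    refine ⟨fun _ => x₀, continuousOn_const, ?_, ?_⟩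
    · intro t ht
      exact ⟨(hc₀ t ht).symm, (hc₁ t ht).symm⟩
    · intro s _
      refine ⟨rfl, hx.symm, ?_⟩
      intro a _ b _
      rw [← hD]
      simp
  -- main case
  choose Γ hΓ using hgeo
  have hΓ0 : ∀ x y, Γ x y 0 = x := fun x y => (hΓ x y).1
  have hΓ1 : ∀ x y, Γ x y (dist x y) = y := fun x y => (hΓ x y).2.1
  have hΓd : ∀ x y, ∀ s ∈ Set.Icc (0:ℝ) (dist x y), ∀ t ∈ Set.Icc (0:ℝ) (dist x y),
      dist (Γ x y s) (Γ x y t) = |s - t| := fun x y => (hΓ x y).2.2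
  choose med hmed using htri
  -- clamp to [0,1]
  set cl : ℝ → ℝ := fun t => max 0 (min 1 t) with hcldef
  have hclmem : ∀ t, 0 ≤ cl t ∧ cl t ≤ 1 := by
    intro t
    exact ⟨le_max_left _ _, max_le zero_le_one (min_le_left _ _)⟩
  have hcl_eq : ∀ t, 0 ≤ t → t ≤ 1 → cl t = t := by
    intro t h0 h1
    rw [hcldef]
    simp only [min_eq_right h1, max_eq_right h0]
  have hcl_lip : ∀ a b : ℝ, |cl a - cl b| ≤ |a - b| := by
    intro a b
    rw [hcldef]
    simp only
    calc |max 0 (min 1 a) - max 0 (min 1 b)| = |max (min 1 a) 0 - max (min 1 b) 0| := by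
          rw [max_comm 0 (min 1 a), max_comm 0 (min 1 b)]
      _ ≤ |min 1 a - min 1 b| := abs_max_sub_max_le_abs _ _ _
      _ ≤ max |(1:ℝ) - 1| |a - b| := abs_min_sub_min_le_max _ _ _ _
      _ = |a - b| := by simp
  have h₀' : PropGeodesic x₀ x₁ (fun t => c₀ (cl t)) := by
    refine ⟨?_, ?_, ?_⟩
    · show c₀ (cl 0) = x₀
      rw [hcl_eq 0 le_rfl zero_le_one]; exact h₀.1
    · show c₀ (cl 1) = x₁
      rw [hcl_eq 1 zero_le_one le_rfl]; exact h₀.2.1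
    · intro a ha b hb
      show dist (c₀ (cl a)) (c₀ (cl b)) = _
      rw [hcl_eq a ha.1 ha.2, hcl_eq b hb.1 hb.2]
      exact h₀.2.2 a ha b hb
  have h₁' : PropGeodesic x₀ x₁ (fun t => c₁ (cl t)) := by
    refine ⟨?_, ?_, ?_⟩
    · show c₁ (cl 0) = x₀
      rw [hcl_eq 0 le_rfl zero_le_one]; exact h₁.1
    · show c₁ (cl 1) = x₁
      rw [hcl_eq 1 zero_le_one le_rfl]; exact h₁.2.1
    · intro a ha b hb
      show dist (c₁ (cl a)) (c₁ (cl b)) = _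
      rw [hcl_eq a ha.1 ha.2, hcl_eq b hb.1 hb.2]
      exact h₁.2.2 a ha b hb
  have hagree01 : ∀ τ, τ ∉ Set.Ioo (0:ℝ) 1 →
      (fun t => c₀ (cl t)) τ = (fun t => c₁ (cl t)) τ := by
    intro τ h
    rw [Set.mem_Ioo, not_and_or, not_lt, not_lt] at h
    rcases h with h | h
    · have e : cl τ = 0 := by
        rw [hcldef]
        simp only
        rw [min_eq_right (h.trans zero_le_one), max_eq_left h]
      show c₀ (cl τ) = c₁ (cl τ)
      rw [e, h₀.1, h₁.1]
    · have e : cl τ = 1 := by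
        rw [hcldef]
        simp only
        rw [min_eq_left h, max_eq_right zero_le_one]
      show c₀ (cl τ) = c₁ (cl τ)
      rw [e, h₀.2.1, h₁.2.1]
  obtain ⟨S, A, B, hSgeo, hS0, hStail, hScompat, hSwin⟩ :=
    levels hD Γ hΓ0 hΓ1 hΓd med hmed _ _ h₀' h₁' hagree01
  set D := dist x₀ x₁ with hDdef
  clear_value D
  have hD0 : (0:ℝ) ≤ D := le_of_lt hD
  have hSdist : ∀ n k a b, 0 ≤ a → a ≤ b → b ≤ 1 →
      dist (S n k a) (S n k b) = (b - a) * D := by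
    intro n k a b h1 h2 h3
    rw [hDdef]
    exact prop_dist (hSgeo n k) h1 h2 h3
  -- consecutive slices are uniformly close
  have cons : ∀ n k τ, 0 ≤ τ → τ ≤ 1 →
      dist (S n k τ) (S n (k+1) τ) ≤ 2*(5/6)^n * D := by
    intro n k τ h0 h1
    obtain ⟨w1, w2, w3, w4, w5⟩ := hSwin n k
    by_cases hτ : τ ∈ Set.Ioo (A n k) (B n k)
    · have e1 : dist (S n k (A n k)) (S n k τ) = (τ - A n k) * D :=
        hSdist n k _ _ w1 (le_of_lt hτ.1) h1
      have e2 : dist (S n (k+1) (A n k)) (S n (k+1) τ) = (τ - A n k) * D :=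
        hSdist n (k+1) _ _ w1 (le_of_lt hτ.1) h1
      have e3 : S n k (A n k) = S n (k+1) (A n k) := w5 _ (by simp)
      have t1 : dist (S n k τ) (S n (k+1) τ) ≤
          dist (S n k τ) (S n k (A n k)) + dist (S n k (A n k)) (S n (k+1) τ) :=
        dist_triangle _ _ _
      rw [dist_comm (S n k τ) (S n k (A n k)), e1, e3, e2] at t1
      have hb : τ - A n k ≤ (5/6)^n := by
        have := hτ.2
        linarith
      nlinarith
    · rw [w5 τ hτ]
      simp only [dist_self]
      positivity
  have tele : ∀ n k m τ, 0 ≤ τ → τ ≤ 1 →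
      dist (S n k τ) (S n (k+m) τ) ≤ m * (2*(5/6)^n * D) := by
    intro n k m
    induction m with
    | zero => intro τ _ _; simp
    | succ m ih =>
      intro τ h0 h1
      have t1 : dist (S n k τ) (S n (k+(m+1)) τ) ≤
          dist (S n k τ) (S n (k+m) τ) + dist (S n (k+m) τ) (S n (k+m+1) τ) := by
        have := dist_triangle (S n k τ) (S n (k+m) τ) (S n (k+(m+1)) τ)
        rw [show k+(m+1) = k+m+1 from rfl] at this ⊢
        exact this
      have t2 := ih τ h0 h1
      have t3 := cons n (k+m) τ h0 h1
      calc dist (S n k τ) (S n (k+(m+1)) τ) ≤ _ + _ := t1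
        _ ≤ m * (2*(5/6)^n * D) + 2*(5/6)^n * D := add_le_add t2 t3
        _ = (m+1 : ℕ) * (2*(5/6)^n * D) := by push_cast; ring
  -- the diagonal sequence and its limit
  have hNE : Nonempty X := ⟨x₀⟩
  have hk6 : ∀ s : ℝ, 0 ≤ s → ∀ n, 6 * (⌊s * 6^n⌋₊) ≤ (⌊s * 6^(n+1)⌋₊) ∧ (⌊s * 6^(n+1)⌋₊) ≤ 6 * (⌊s * 6^n⌋₊) + 5 := by
    intro s hs n
    have hfl : ((⌊s * 6^n⌋₊) : ℝ) ≤ s * 6^n := by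
      exact Nat.floor_le (by positivity)
    have hfu : s * 6^n < (⌊s * 6^n⌋₊) + 1 := by
      exact Nat.lt_floor_add_one _
    constructor
    · apply Nat.le_floor
      push_cast
      rw [pow_succ]
      nlinarith
    · have h2 : (⌊s * 6^(n+1)⌋₊) < 6 * (⌊s * 6^n⌋₊) + 6 := by
        rw [Nat.floor_lt (by positivity)]
        push_cast
        rw [pow_succ]
        nlinarith
      omega
  have hseq_cb : ∀ (t s : ℝ), 0 ≤ s → ∀ n,
      dist (S n ((⌊s * 6^n⌋₊)) (cl t)) (S (n+1) ((⌊s * 6^(n+1)⌋₊)) (cl t)) ≤ (10*D) * (5/6)^n := by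
    intro t s hs n
    obtain ⟨hlo, hhi⟩ := hk6 s hs n
    have hm : (⌊s * 6^(n+1)⌋₊) = 6 * (⌊s * 6^n⌋₊) + ((⌊s * 6^(n+1)⌋₊) - 6 * (⌊s * 6^n⌋₊)) := by omega
    have hτ := hclmem t
    have hbig : (0:ℝ) ≤ 2*(5/6)^(n+1) * D := by positivity
    calc dist (S n ((⌊s * 6^n⌋₊)) (cl t)) (S (n+1) ((⌊s * 6^(n+1)⌋₊)) (cl t))
        = dist (S (n+1) (6 * (⌊s * 6^n⌋₊)) (cl t))
            (S (n+1) (6*(⌊s * 6^n⌋₊) + ((⌊s * 6^(n+1)⌋₊) - 6*(⌊s * 6^n⌋₊))) (cl t)) := by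
          rw [hScompat n ((⌊s * 6^n⌋₊)), ← hm]
      _ ≤ ((⌊s * 6^(n+1)⌋₊) - 6*(⌊s * 6^n⌋₊) : ℕ) * (2*(5/6)^(n+1) * D) :=
          tele (n+1) _ _ _ hτ.1 hτ.2
      _ ≤ 5 * (2*(5/6)^(n+1) * D) := by
          have hle : (((⌊s * 6^(n+1)⌋₊) - 6*(⌊s * 6^n⌋₊) : ℕ) : ℝ) ≤ 5 := by
            exact_mod_cast (by omega : (⌊s * 6^(n+1)⌋₊) - 6*(⌊s * 6^n⌋₊) ≤ 5)
          nlinarith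
      _ ≤ (10*D) * (5/6)^n := by
          rw [pow_succ]
          nlinarith [pow_nonneg (by norm_num : (0:ℝ) ≤ 5/6) n]
  have hcauchy : ∀ t s : ℝ, 0 ≤ s → CauchySeq (fun n => S n ((⌊s * 6^n⌋₊)) (cl t)) := by
    intro t s hs
    exact cauchySeq_of_le_geometric (5/6) (10*D) (by norm_num) (hseq_cb t s hs)
  set H : ℝ × ℝ → X := fun p => Filter.limUnder Filter.atTop (fun n => S n ((⌊p.2 * 6^n⌋₊)) (cl p.1))
    with hH
  have htends : ∀ t s : ℝ, 0 ≤ s →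
      Filter.Tendsto (fun n => S n ((⌊s * 6^n⌋₊)) (cl t)) Filter.atTop (nhds (H (t, s))) := by
    intro t s hs
    obtain ⟨L, hL⟩ := cauchySeq_tendsto_of_complete (hcauchy t s hs)
    have he : H (t, s) = L := by rw [hH]; exact hL.limUnder_eq
    rw [he]; exact hL
  have hdistlim : ∀ t s : ℝ, 0 ≤ s → ∀ n,
      dist (S n ((⌊s * 6^n⌋₊)) (cl t)) (H (t, s)) ≤ 60*D * (5/6)^n := by
    intro t s hs n
    have h := dist_le_of_le_geometric_of_tendsto (5/6) (10*D) (by norm_num)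
      (hseq_cb t s hs) (htends t s hs) n
    calc dist (S n ((⌊s * 6^n⌋₊)) (cl t)) (H (t, s)) ≤ (10*D) * (5/6)^n / (1 - 5/6) := h
      _ = 60*D*(5/6)^n := by ring
  refine ⟨H, ?_, ?_, ?_⟩
  · -- continuity
    rw [Metric.continuousOn_iff]
    intro p hp ε hε
    obtain ⟨n, hn⟩ : ∃ n : ℕ, (5/6:ℝ)^n < ε / (4 * (122*D + 1)) :=
      exists_pow_lt_of_lt_one (by positivity) (by norm_num)
    have hγpos : (0:ℝ) ≤ (5/6:ℝ)^n := by positivity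
    have h6pos : (0:ℝ) < 1/6^n := by positivity
    set δ : ℝ := min (1/6^n) (ε/(2*(D+1))) with hδ
    have hδpos : 0 < δ := lt_min h6pos (by positivity)
    have hδ6 : δ ≤ 1/6^n := min_le_left _ _
    have hδε : δ ≤ ε/(2*(D+1)) := min_le_right _ _
    clear_value δ
    refine ⟨δ, hδpos, ?_⟩
    intro q hq hdist
    have hq1 : q.1 ∈ Set.Icc (0:ℝ) 1 := hq.1
    have hq2 : q.2 ∈ Set.Icc (0:ℝ) 1 := hq.2
    have hp1 : p.1 ∈ Set.Icc (0:ℝ) 1 := hp.1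
    have hp2 : p.2 ∈ Set.Icc (0:ℝ) 1 := hp.2
    have hd1 : |q.1 - p.1| < δ := by
      have h := le_max_left (dist q.1 p.1) (dist q.2 p.2)
      rw [← Prod.dist_eq, Real.dist_eq] at h
      linarith
    have hd2 : |q.2 - p.2| < δ := by
      have h := le_max_right (dist q.1 p.1) (dist q.2 p.2)
      rw [← Prod.dist_eq, Real.dist_eq] at h
      linarith
    -- the floors at level n differ by at most 1
    have hfl : ∀ a b : ℝ, 0 ≤ a → 0 ≤ b → |a - b| < δ → (⌊a * 6^n⌋₊) ≤ (⌊b * 6^n⌋₊) + 1 := by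
      intro a b ha hb hab
      have h1 : a * 6^n ≤ b * 6^n + 1 := by
        have h6 : (0:ℝ) < 6^n := by positivity
        have : (a - b) * 6^n ≤ 1 := by
          calc (a - b) * 6^n ≤ |a - b| * 6^n := by
                apply mul_le_mul_of_nonneg_right (le_abs_self _) (le_of_lt h6)
            _ ≤ (1/6^n) * 6^n := by
                apply mul_le_mul_of_nonneg_right _ (le_of_lt h6)
                linarith
            _ = 1 := by field_simp
        nlinarith
      have h2 : (⌊a * 6^n⌋₊) ≤ ⌊b * 6^n + 1⌋₊ := Nat.floor_le_floor h1
      rwa [Nat.floor_add_one (by positivity)] at h2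
    have hkq : (⌊q.2 * 6^n⌋₊) ≤ (⌊p.2 * 6^n⌋₊) + 1 := hfl q.2 p.2 hq2.1 hp2.1 hd2
    have hkp : (⌊p.2 * 6^n⌋₊) ≤ (⌊q.2 * 6^n⌋₊) + 1 := by
      apply hfl p.2 q.2 hp2.1 hq2.1
      rwa [abs_sub_comm]
    have hnear : ∀ k k' τ, 0 ≤ τ → τ ≤ 1 → k ≤ k' + 1 → k' ≤ k + 1 →
        dist (S n k τ) (S n k' τ) ≤ 2*(5/6)^n*D := by
      intro k k' τ hτ0 hτ1 hb1 hb2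
      have key : ∀ a b : ℕ, a ≤ b → b ≤ a + 1 →
          dist (S n a τ) (S n b τ) ≤ 2*(5/6)^n*D := by
        intro a b h1 h2
        have he : b = a + (b - a) := by omega
        rw [he]
        calc dist (S n a τ) (S n (a + (b-a)) τ) ≤ (b-a : ℕ) * (2*(5/6)^n*D) :=
            tele n a _ τ hτ0 hτ1
          _ ≤ 2*(5/6)^n*D := by
              have h5 : ((b - a : ℕ) : ℝ) ≤ 1 := by
                exact_mod_cast (by omega : b - a ≤ 1)
              have h6 := mul_le_mul_of_nonneg_right h5
                (show (0:ℝ) ≤ 2*(5/6)^n*D by positivity)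
              linarith
      rcases le_total k k' with h | h
      · exact key k k' h (by omega)
      · rw [dist_comm]; exact key k' k h (by omega)
    have hmid : dist (S n ((⌊q.2 * 6^n⌋₊)) (cl q.1)) (S n ((⌊p.2 * 6^n⌋₊)) (cl p.1)) ≤
        |q.1 - p.1| * D + 2*(5/6)^n*D := by
      have t1 : dist (S n ((⌊q.2 * 6^n⌋₊)) (cl q.1)) (S n ((⌊q.2 * 6^n⌋₊)) (cl p.1)) ≤
          |q.1 - p.1| * D := by
        have he : dist (S n ((⌊q.2 * 6^n⌋₊)) (cl q.1)) (S n ((⌊q.2 * 6^n⌋₊)) (cl p.1)) =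
            |cl q.1 - cl p.1| * D := by
          rw [hDdef]
          exact (hSgeo n _).2.2 _ ⟨(hclmem q.1).1, (hclmem q.1).2⟩
            _ ⟨(hclmem p.1).1, (hclmem p.1).2⟩
        rw [he]
        exact mul_le_mul_of_nonneg_right (hcl_lip q.1 p.1) hD0
      have t2 : dist (S n ((⌊q.2 * 6^n⌋₊)) (cl p.1)) (S n ((⌊p.2 * 6^n⌋₊)) (cl p.1)) ≤
          2*(5/6)^n*D := hnear _ _ _ (hclmem p.1).1 (hclmem p.1).2 hkq hkp
      calc dist (S n ((⌊q.2 * 6^n⌋₊)) (cl q.1)) (S n ((⌊p.2 * 6^n⌋₊)) (cl p.1)) ≤ _ + _ :=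
          dist_triangle _ (S n ((⌊q.2 * 6^n⌋₊)) (cl p.1)) _
        _ ≤ |q.1 - p.1| * D + 2*(5/6)^n*D := add_le_add t1 t2
    have hlim1 : dist (H q) (S n ((⌊q.2 * 6^n⌋₊)) (cl q.1)) ≤ 60*D*(5/6)^n := by
      rw [dist_comm]
      have := hdistlim q.1 q.2 hq2.1 n
      simpa using this
    have hlim2 : dist (S n ((⌊p.2 * 6^n⌋₊)) (cl p.1)) (H p) ≤ 60*D*(5/6)^n := by
      have := hdistlim p.1 p.2 hp2.1 n
      simpa using this
    have htot : dist (H q) (H p) ≤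
        60*D*(5/6)^n + (|q.1 - p.1| * D + 2*(5/6)^n*D) + 60*D*(5/6)^n := by
      calc dist (H q) (H p) ≤ dist (H q) (S n ((⌊q.2 * 6^n⌋₊)) (cl q.1)) +
            dist (S n ((⌊q.2 * 6^n⌋₊)) (cl q.1)) (S n ((⌊p.2 * 6^n⌋₊)) (cl p.1)) +
            dist (S n ((⌊p.2 * 6^n⌋₊)) (cl p.1)) (H p) := dist_triangle4 _ _ _ _
        _ ≤ _ := by
            apply add_le_add (add_le_add hlim1 hmid) hlim2
    have b1 : 122*D*(5/6)^n < ε/2 := by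
      have h1 : (122*D+1) * (5/6)^n < (122*D+1) * (ε / (4 * (122*D + 1))) :=
        mul_lt_mul_of_pos_left hn (by positivity)
      have h2 : (122*D+1) * (ε / (4 * (122*D + 1))) = ε/4 := by
        field_simp
      nlinarith
    have b2 : |q.1 - p.1| * D < ε/2 := by
      have h1 : |q.1 - p.1| * D ≤ δ * D :=
        mul_le_mul_of_nonneg_right (le_of_lt hd1) hD0
      have h2 : δ * D < ε/2 := by
        have h3 : δ * D ≤ (ε/(2*(D+1))) * D := mul_le_mul_of_nonneg_right hδε hD0
        have h4 : (ε/(2*(D+1))) * D < ε/2 := by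
          rw [div_mul_eq_mul_div, div_lt_iff₀ (by positivity)]
          nlinarith
        linarith
      linarith
    calc dist (H q) (H p) ≤
        60*D*(5/6)^n + (|q.1 - p.1| * D + 2*(5/6)^n*D) + 60*D*(5/6)^n := htot
      _ < ε := by linarith
  · -- endpoints
    intro t ht
    constructor
    · have he : (fun n => S n ((⌊(0:ℝ) * 6^n⌋₊)) (cl t)) = fun _ => c₀ (cl (cl t)) := by
        funext n
        have h0 : (⌊(0:ℝ) * 6^n⌋₊) = 0 := by simp
        rw [h0, hS0 n]
      have hv : H (t, 0) = c₀ (cl (cl t)) := by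
        rw [hH]
        simp only
        rw [he]
        exact tendsto_const_nhds.limUnder_eq
      rw [hv, hcl_eq t ht.1 ht.2, hcl_eq t ht.1 ht.2]
    · have hkn1 : ∀ m : ℕ, (⌊(1:ℝ) * 6^m⌋₊) = 6^m := by
        intro m
        simp only [one_mul]
        rw [show ((6:ℝ))^m = ((6^m : ℕ) : ℝ) by push_cast; ring]
        exact Nat.floor_natCast _
      have he : (fun n => S n ((⌊(1:ℝ) * 6^n⌋₊)) (cl t)) = fun _ => c₁ (cl (cl t)) := by
        funext n
        rw [hkn1 n, hStail n (6^n) le_rfl]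
      have hv : H (t, 1) = c₁ (cl (cl t)) := by
        rw [hH]
        simp only
        rw [he]
        exact tendsto_const_nhds.limUnder_eq
      rw [hv, hcl_eq t ht.1 ht.2, hcl_eq t ht.1 ht.2]
  · -- slices are proportional geodesics
    intro s hs
    apply prop_of_limit (f := fun n t => S n ((⌊s * 6^n⌋₊)) (cl t))
    · intro n
      refine ⟨?_, ?_, ?_⟩
      · show S n ((⌊s * 6^n⌋₊)) (cl 0) = x₀
        rw [hcl_eq 0 le_rfl zero_le_one]
        exact (hSgeo n _).1
      · show S n ((⌊s * 6^n⌋₊)) (cl 1) = x₁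
        rw [hcl_eq 1 zero_le_one le_rfl]
        exact (hSgeo n _).2.1
      · intro a ha b hb
        show dist (S n ((⌊s * 6^n⌋₊)) (cl a)) (S n ((⌊s * 6^n⌋₊)) (cl b)) = _
        rw [hcl_eq a ha.1 ha.2, hcl_eq b hb.1 hb.2]
        exact (hSgeo n _).2.2 a ha b hb
    · intro t
      exact htends t s hs.1


end Stmt12


/-- In a complete geodesic tripod space, any two shortest geodesics with the same
endpoints are contained in a geodesic homotopy. -/
theorem stmt12 {X : Type*} [MetricSpace X] [CompleteSpace X]
    (hgeo : GeodesicSpace X) (htri : TripodCond X)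
    (x₀ x₁ : X) (c₀ c₁ : ℝ → X)
    (h₀ : PropGeodesic x₀ x₁ c₀) (h₁ : PropGeodesic x₀ x₁ c₁) :
    ∃ c : ℝ × ℝ → X,
      ContinuousOn c (Set.Icc (0:ℝ) 1 ×ˢ Set.Icc (0:ℝ) 1) ∧
      (∀ t ∈ Set.Icc (0:ℝ) 1, c (t, 0) = c₀ t ∧ c (t, 1) = c₁ t) ∧
      (∀ s ∈ Set.Icc (0:ℝ) 1, PropGeodesic x₀ x₁ (fun t => c (t, s))) := by
  exact Stmt12.stmt12' hgeo htri x₀ x₁ c₀ c₁ h₀ h₁
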